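/- arXiv:1309.0593 — 5 statements merged into one kernel-verified Lean document; each statement's English description precedes it below -/
import Mathlib

section
/- Let A, B, C be finite sets in a commutative group. Then |A + B + C|² ≤ |A + B| · |A + C| · |B + C|. -/
open Pointwise Finset

/-- Discrete Loomis–Whitney inequality: the square of the size of a finite set of triples is
at most the product of the sizes of its three pairwise projections. -/
lemma loomis_whitney_finset {α β γ : Type*} [DecidableEq α] [DecidableEq β] [DecidableEq γ]
    (T : Finset (α × β × γ)) :
    T.card ^ 2 ≤ (T.image fun p => (p.1, p.2.1)).card *
      ((T.image fun p => (p.1, p.2.2)).card * (T.image fun p => (p.2.1, p.2.2)).card) := by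
  classical
  set P := T.image fun p => (p.1, p.2.1) with hP
  have hfib : T.card = ∑ q ∈ P, (T.filter fun p => (p.1, p.2.1) = q).card :=
    card_eq_sum_card_fiberwise (fun p hp => mem_image_of_mem _ hp)
  have hCS : T.card ^ 2 ≤ P.card * ∑ q ∈ P, (T.filter fun p => (p.1, p.2.1) = q).card ^ 2 := by
    rw [hfib]
    exact sq_sum_le_card_mul_sum_sq
  -- now bound the sum of squared fibers
  set W := (T ×ˢ T).filter fun pp => pp.1.1 = pp.2.1 ∧ pp.1.2.1 = pp.2.2.1 with hW
  have hsum : ∑ q ∈ P, (T.filter fun p => (p.1, p.2.1) = q).card ^ 2 = W.card := by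
    have : W.card = ∑ q ∈ P, (W.filter fun pp => (pp.1.1, pp.1.2.1) = q).card := by
      refine card_eq_sum_card_fiberwise fun pp hpp => ?_
      rw [hW, mem_coe, mem_filter, mem_product] at hpp
      exact mem_image_of_mem _ hpp.1.1
    rw [this]
    refine Finset.sum_congr rfl fun q hq => ?_
    have hWe : W.filter (fun pp => (pp.1.1, pp.1.2.1) = q)
        = (T.filter fun p => (p.1, p.2.1) = q) ×ˢ (T.filter fun p => (p.1, p.2.1) = q) := by
      ext ⟨p, p'⟩
      simp only [hW, mem_filter, mem_product, Prod.ext_iff]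
      constructor
      · rintro ⟨⟨⟨h1, h2⟩, h3, h4⟩, h5, h6⟩
        exact ⟨⟨h1, h5, h6⟩, h2, h3 ▸ h5, h4 ▸ h6⟩
      · rintro ⟨⟨h1, h2, h3⟩, h4, h5, h6⟩
        exact ⟨⟨⟨h1, h4⟩, h2.trans h5.symm, h3.trans h6.symm⟩, h2, h3⟩
    rw [hWe, card_product, sq]
  have hWle : W.card ≤ (T.image fun p => (p.1, p.2.2)).card *
      (T.image fun p => (p.2.1, p.2.2)).card := by
    rw [← card_product]
    refine card_le_card_of_injOn
      (fun pp => ((pp.2.1, pp.2.2.2), (pp.1.2.1, pp.1.2.2))) (fun pp hpp => ?_) ?_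
    · rw [hW, mem_coe, mem_filter, mem_product] at hpp
      exact mem_product.2 ⟨mem_image_of_mem _ hpp.1.2, mem_image_of_mem _ hpp.1.1⟩
    · rintro ⟨⟨x, y, z⟩, ⟨x', y', z'⟩⟩ h1 ⟨⟨u, v, w⟩, ⟨u', v', w'⟩⟩ h2 heq
      rw [hW, coe_filter] at h1 h2
      obtain ⟨-, hx, hy⟩ := h1
      obtain ⟨-, hu, hv⟩ := h2
      simp only [Prod.ext_iff] at heq ⊢
      obtain ⟨⟨e1, e2⟩, e3, e4⟩ := heq
      simp only at hx hy hu hv e1 e2 e3 e4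
      refine ⟨⟨?_, ?_, ?_⟩, e1, ?_, e2⟩
      · rw [hx, e1, ← hu]
      · exact e3
      · exact e4
      · rw [← hy, e3, hv]
  calc T.card ^ 2 ≤ P.card * ∑ q ∈ P, (T.filter fun p => (p.1, p.2.1) = q).card ^ 2 := hCS
    _ = P.card * W.card := by rw [hsum]
    _ ≤ P.card * ((T.image fun p => (p.1, p.2.2)).card *
        (T.image fun p => (p.2.1, p.2.2)).card) := by
      exact Nat.mul_le_mul_left _ hWle

/-- Auxiliary version of the GMR inequality with a chosen linear order on the group. -/
lemma gmr_aux {G : Type*} [AddCommGroup G] [LinearOrder G] [DecidableEq G]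
    (A B C : Finset G) :
    (A + B + C).card ^ 2 ≤ (A + B).card * (A + C).card * (B + C).card := by
  classical
  set S := A + B + C with hS
  -- canonical (lexicographically minimal) representations
  have hrep : ∀ s : G, ∃ p : G × G × G, s ∈ S →
      p.1 ∈ A ∧ p.2.1 ∈ B ∧ p.2.2 ∈ C ∧ p.1 + p.2.1 + p.2.2 = s ∧
      (∀ a' ∈ A, s - a' ∈ B + C → p.1 ≤ a') ∧
      (∀ b' ∈ B, s - p.1 - b' ∈ C → p.2.1 ≤ b') := by
    intro s
    by_cases hs : s ∈ S
    swap
    · exact ⟨(0, 0, 0), fun h => absurd h hs⟩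
    · obtain ⟨x, hx, c, hc, hxc⟩ := Finset.mem_add.1 hs
      obtain ⟨a, ha, b, hb, hab⟩ := Finset.mem_add.1 hx
      have hane : (A.filter fun a' => s - a' ∈ B + C).Nonempty := by
        refine ⟨a, mem_filter.2 ⟨ha, ?_⟩⟩
        have : s - a = b + c := by rw [← hxc, ← hab]; abel
        rw [this]; exact add_mem_add hb hc
      set a0 := (A.filter fun a' => s - a' ∈ B + C).min' hane with ha0
      have ha0mem := (A.filter fun a' => s - a' ∈ B + C).min'_mem hane
      rw [mem_filter] at ha0mem
      obtain ⟨ha0A, ha0bc⟩ := ha0mem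
      obtain ⟨b', hb', c', hc', hbc'⟩ := Finset.mem_add.1 ha0bc
      have hbne : (B.filter fun b'' => s - a0 - b'' ∈ C).Nonempty := by
        refine ⟨b', mem_filter.2 ⟨hb', ?_⟩⟩
        have : s - a0 - b' = c' := by rw [← hbc']; abel
        rw [this]; exact hc'
      set b0 := (B.filter fun b'' => s - a0 - b'' ∈ C).min' hbne with hb0
      have hb0mem := (B.filter fun b'' => s - a0 - b'' ∈ C).min'_mem hbne
      rw [mem_filter] at hb0mem
      obtain ⟨hb0B, hb0c⟩ := hb0mem
      have habc : ∀ x y z : G, x + y + (z - x - y) = z := fun x y z => by abel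
      refine ⟨(a0, b0, s - a0 - b0), fun _ => ⟨ha0A, hb0B, hb0c, habc a0 b0 s, ?_, ?_⟩⟩
      · intro a' ha' hbc''
        exact (A.filter fun a' => s - a' ∈ B + C).min'_le _ (mem_filter.2 ⟨ha', hbc''⟩)
      · intro b'' hb'' hc''
        exact (B.filter fun b'' => s - a0 - b'' ∈ C).min'_le _ (mem_filter.2 ⟨hb'', hc''⟩)
  choose f hf using hrep
  set T : Finset (G × G × G) := S.image f with hT
  have hTcard : T.card = S.card := by
    rw [hT]
    refine card_image_of_injOn fun s hs t ht h => ?_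
    have hssum := (hf s hs).2.2.2.1
    have htsum := (hf t ht).2.2.2.1
    rw [← hssum, ← htsum, h]
  -- key swapping lemmas
  have key_a : ∀ s ∈ S, ∀ t ∈ S,
      ((f s).1 + (f s).2.1 = (f t).1 + (f t).2.1 ∨
        (f s).1 + (f s).2.2 = (f t).1 + (f t).2.2) → (f s).1 = (f t).1 := by
    intro s hs t ht h
    obtain ⟨hsA, hsB, hsC, hssum, hsamin, -⟩ := hf s hs
    obtain ⟨htA, htB, htC, htsum, htamin, -⟩ := hf t ht
    rcases hfs : f s with ⟨a₁, b₁, c₁⟩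
    rcases hft : f t with ⟨a₂, b₂, c₂⟩
    simp only [hfs, hft] at hsA hsB hsC hssum hsamin htA htB htC htsum htamin h ⊢
    have h1 : a₁ ≤ a₂ := by
      refine hsamin a₂ htA ?_
      rcases h with h | h
      · have : s - a₂ = b₂ + c₁ := by rw [← hssum, h]; abel
        rw [this]; exact add_mem_add htB hsC
      · have : s - a₂ = b₁ + c₂ := by
          rw [← hssum]
          have e : c₁ - a₂ = c₂ - a₁ := by
            rw [sub_eq_sub_iff_add_eq_add, add_comm c₁, add_comm c₂, h]
          calc a₁ + b₁ + c₁ - a₂ = b₁ + (a₁ + (c₁ - a₂)) := by abel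
            _ = b₁ + (a₁ + (c₂ - a₁)) := by rw [e]
            _ = b₁ + c₂ := by abel
        rw [this]; exact add_mem_add hsB htC
    have h2 : a₂ ≤ a₁ := by
      refine htamin a₁ hsA ?_
      rcases h with h | h
      · have : t - a₁ = b₁ + c₂ := by rw [← htsum, ← h]; abel
        rw [this]; exact add_mem_add hsB htC
      · have : t - a₁ = b₂ + c₁ := by
          rw [← htsum]
          have e : c₂ - a₁ = c₁ - a₂ := by
            rw [sub_eq_sub_iff_add_eq_add, add_comm c₂, add_comm c₁, h.symm]
          calc a₂ + b₂ + c₂ - a₁ = b₂ + (a₂ + (c₂ - a₁)) := by abel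
            _ = b₂ + (a₂ + (c₁ - a₂)) := by rw [e]
            _ = b₂ + c₁ := by abel
        rw [this]; exact add_mem_add htB hsC
    exact le_antisymm h1 h2
  have key_b : ∀ s ∈ S, ∀ t ∈ S,
      (f s).2.1 + (f s).2.2 = (f t).2.1 + (f t).2.2 → (f s).2.1 = (f t).2.1 := by
    intro s hs t ht h
    obtain ⟨hsA, hsB, hsC, hssum, -, hsbmin⟩ := hf s hs
    obtain ⟨htA, htB, htC, htsum, -, htbmin⟩ := hf t ht
    rcases hfs : f s with ⟨a₁, b₁, c₁⟩
    rcases hft : f t with ⟨a₂, b₂, c₂⟩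
    simp only [hfs, hft] at hsA hsB hsC hssum hsbmin htA htB htC htsum htbmin h ⊢
    have h1 : b₁ ≤ b₂ := by
      refine hsbmin b₂ htB ?_
      have : s - a₁ - b₂ = c₂ := by rw [← hssum, add_assoc, h]; abel
      rw [this]; exact htC
    have h2 : b₂ ≤ b₁ := by
      refine htbmin b₁ hsB ?_
      have : t - a₂ - b₁ = c₁ := by rw [← htsum, add_assoc, ← h]; abel
      rw [this]; exact hsC
    exact le_antisymm h1 h2
  -- projection bounds
  have h12 : (T.image fun p => (p.1, p.2.1)).card ≤ (A + B).card := by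
    refine card_le_card_of_injOn (fun q => q.1 + q.2) (fun q hq => ?_) ?_
    · rw [hT, Finset.image_image] at hq
      obtain ⟨s, hs, rfl⟩ := Finset.mem_image.1 hq
      exact add_mem_add (hf s hs).1 (hf s hs).2.1
    · intro q hq q' hq'
      rw [hT, Finset.image_image, coe_image] at hq hq'
      obtain ⟨s, hs, rfl⟩ := hq
      obtain ⟨t, ht, rfl⟩ := hq'
      intro hqq
      simp only [Function.comp] at hqq ⊢
      have hae : (f s).1 = (f t).1 := key_a s hs t ht (Or.inl hqq)
      have hbe : (f s).2.1 = (f t).2.1 := by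
        rw [hae] at hqq; exact add_left_cancel hqq
      rw [Prod.ext_iff]; exact ⟨hae, hbe⟩
  have h13 : (T.image fun p => (p.1, p.2.2)).card ≤ (A + C).card := by
    refine card_le_card_of_injOn (fun q => q.1 + q.2) (fun q hq => ?_) ?_
    · rw [hT, Finset.image_image] at hq
      obtain ⟨s, hs, rfl⟩ := Finset.mem_image.1 hq
      exact add_mem_add (hf s hs).1 (hf s hs).2.2.1
    · intro q hq q' hq'
      rw [hT, Finset.image_image, coe_image] at hq hq'
      obtain ⟨s, hs, rfl⟩ := hq
      obtain ⟨t, ht, rfl⟩ := hq'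
      intro hqq
      simp only [Function.comp] at hqq ⊢
      have hae : (f s).1 = (f t).1 := key_a s hs t ht (Or.inr hqq)
      have hce : (f s).2.2 = (f t).2.2 := by
        rw [hae] at hqq; exact add_left_cancel hqq
      rw [Prod.ext_iff]; exact ⟨hae, hce⟩
  have h23 : (T.image fun p => (p.2.1, p.2.2)).card ≤ (B + C).card := by
    refine card_le_card_of_injOn (fun q => q.1 + q.2) (fun q hq => ?_) ?_
    · rw [hT, Finset.image_image] at hq
      obtain ⟨s, hs, rfl⟩ := Finset.mem_image.1 hq
      exact add_mem_add (hf s hs).2.1 (hf s hs).2.2.1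
    · intro q hq q' hq'
      rw [hT, Finset.image_image, coe_image] at hq hq'
      obtain ⟨s, hs, rfl⟩ := hq
      obtain ⟨t, ht, rfl⟩ := hq'
      intro hqq
      simp only [Function.comp] at hqq ⊢
      have hbe : (f s).2.1 = (f t).2.1 := key_b s hs t ht hqq
      have hce : (f s).2.2 = (f t).2.2 := by
        rw [hbe] at hqq; exact add_left_cancel hqq
      rw [Prod.ext_iff]; exact ⟨hbe, hce⟩
  calc S.card ^ 2 = T.card ^ 2 := by rw [hTcard]
    _ ≤ (T.image fun p => (p.1, p.2.1)).card *
        ((T.image fun p => (p.1, p.2.2)).card * (T.image fun p => (p.2.1, p.2.2)).card) :=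
      loomis_whitney_finset T
    _ ≤ (A + B).card * ((A + C).card * (B + C).card) :=
      Nat.mul_le_mul h12 (Nat.mul_le_mul h13 h23)
    _ = (A + B).card * (A + C).card * (B + C).card := by rw [mul_assoc]

theorem stmt_2 {G : Type*} [AddCommGroup G] [DecidableEq G]
    (A B C : Finset G) :
    (A + B + C).card ^ 2 ≤ (A + B).card * (A + C).card * (B + C).card := by
  letI : LinearOrder G := IsWellOrder.linearOrder WellOrderingRel
  exact gmr_aux A B C
end

section
/- Let f and g be completely multiplicative arithmetic functions with 0 ≤ f(p) ≤ g(p) < p for every prime p. Then for every real X ≥ 1, ∑_{n ≤ X} f(n)/n ≥ (∏_{p ≤ X} (1 − g(p)/p)) · (∏_{p ≤ X} (1 − f(p)/p))^{−1} · ∑_{n ≤ X} g(n)/n. -/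
open Finset Nat ArithmeticFunction

private lemma cm_pow {f : ℕ → ℝ} (hf1 : f 1 = 1)
    (hfmul : ∀ m n : ℕ, f (m * n) = f m * f n) (p k : ℕ) :
    f (p ^ k) = f p ^ k := by
  induction k with
  | zero => simpa using hf1
  | succ k ih => rw [pow_succ, hfmul, ih, pow_succ]

/-- the arithmetic function attached to f -/
private def AF (f : ℕ → ℝ) : ArithmeticFunction ℝ := ⟨fun n => if n = 0 then 0 else f n, by simp⟩

private lemma AF_apply {f : ℕ → ℝ} {n : ℕ} (hn : n ≠ 0) : AF f n = f n := if_neg hn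

private lemma AF_mult {f : ℕ → ℝ} (hf1 : f 1 = 1)
    (hfmul : ∀ m n : ℕ, f (m * n) = f m * f n) : (AF f).IsMultiplicative := by
  constructor
  · rw [AF_apply one_ne_zero, hf1]
  · intro m n _
    rcases eq_or_ne m 0 with rfl | hm
    · simp [AF]
    rcases eq_or_ne n 0 with rfl | hn
    · simp [AF]
    rw [AF_apply (mul_ne_zero hm hn), AF_apply hm, AF_apply hn, hfmul]

private lemma AF_nonneg {f : ℕ → ℝ} (hf1 : f 1 = 1)
    (hfmul : ∀ m n : ℕ, f (m * n) = f m * f n)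
    (hfp : ∀ p : ℕ, p.Prime → 0 ≤ f p) {n : ℕ} (hn : n ≠ 0) : 0 ≤ f n := by
  rw [← AF_apply (f := f) hn,
    (AF_mult hf1 hfmul).multiplicative_factorization (AF f) hn]
  refine Finset.prod_nonneg fun p hp => ?_
  have hpp : p.Prime := Nat.prime_of_mem_primeFactors hp
  show 0 ≤ AF f (p ^ n.factorization p)
  rw [AF_apply (pow_ne_zero _ hpp.ne_zero), cm_pow hf1 hfmul]
  exact pow_nonneg (hfp p hpp) _

/-- moebius times f, as a real arithmetic function -/
private def MF (f : ℕ → ℝ) : ArithmeticFunction ℝ :=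
  ((ArithmeticFunction.moebius : ArithmeticFunction ℤ) : ArithmeticFunction ℝ).pmul (AF f)

private lemma MF_mult {f : ℕ → ℝ} (hf1 : f 1 = 1)
    (hfmul : ∀ m n : ℕ, f (m * n) = f m * f n) : (MF f).IsMultiplicative :=
  isMultiplicative_moebius.intCast.pmul (AF_mult hf1 hfmul)

private lemma MF_mul_AF {f : ℕ → ℝ} (hf1 : f 1 = 1)
    (hfmul : ∀ m n : ℕ, f (m * n) = f m * f n) : MF f * AF f = 1 := by
  ext n
  rcases eq_or_ne n 0 with rfl | hn
  · simp
  rw [mul_apply, Nat.sum_divisorsAntidiagonal (fun a b => MF f a * AF f b)]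
  have key : ∀ a ∈ n.divisors, MF f a * AF f (n / a)
      = ((ArithmeticFunction.moebius a : ℝ)) * f n := by
    intro a ha
    rw [Nat.mem_divisors] at ha
    have ha0 : a ≠ 0 := by
      rintro rfl; exact hn (Nat.eq_zero_of_zero_dvd ha.1)
    have hd0 : n / a ≠ 0 := Nat.div_ne_zero_iff.2 ⟨ha0, Nat.le_of_dvd (Nat.pos_of_ne_zero hn) ha.1⟩
    rw [MF, pmul_apply, AF_apply ha0, AF_apply hd0, intCoe_apply, mul_assoc, ← hfmul,
      Nat.mul_div_cancel' ha.1]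
  rw [Finset.sum_congr rfl key, ← Finset.sum_mul]
  have h : (∑ a ∈ n.divisors, (ArithmeticFunction.moebius a : ℤ))
      = if n = 1 then 1 else 0 := by
    have h2 : (ArithmeticFunction.moebius * (ArithmeticFunction.zeta : ArithmeticFunction ℕ) :
        ArithmeticFunction ℤ) n = (1 : ArithmeticFunction ℤ) n := by
      rw [ArithmeticFunction.moebius_mul_coe_zeta]
    rwa [ArithmeticFunction.coe_mul_zeta_apply, ArithmeticFunction.one_apply] at h2
  have hμ : (∑ a ∈ n.divisors, ((ArithmeticFunction.moebius a : ℤ) : ℝ))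
      = if n = 1 then 1 else 0 := by
    rw [← Int.cast_sum, h]; split <;> simp
  rw [hμ]
  rcases eq_or_ne n 1 with rfl | hn1
  · simp [hf1]
  · simp [hn1]

section TT

private lemma TT_mult {f g : ℕ → ℝ} (hf1 : f 1 = 1) (hfmul : ∀ m n : ℕ, f (m * n) = f m * f n)
    (hg1 : g 1 = 1) (hgmul : ∀ m n : ℕ, g (m * n) = g m * g n) :
    (MF f * AF g).IsMultiplicative :=
  (MF_mult hf1 hfmul).mul (AF_mult hg1 hgmul)

private lemma TT_conv {f g : ℕ → ℝ} (hf1 : f 1 = 1)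
    (hfmul : ∀ m n : ℕ, f (m * n) = f m * f n) : (MF f * AF g) * AF f = AF g := by
  have h : (MF f * AF g) * AF f = (MF f * AF f) * AF g := by ring
  rw [h, MF_mul_AF hf1 hfmul, one_mul]

private lemma TT_pk {f g : ℕ → ℝ} (hf1 : f 1 = 1) (hg1 : g 1 = 1)
    (hgmul : ∀ m n : ℕ, g (m * n) = g m * g n)
    {p : ℕ} (hp : p.Prime) {k : ℕ} (hk : k ≠ 0) :
    (MF f * AF g) (p ^ k) = g p ^ (k - 1) * (g p - f p) := by
  obtain ⟨j, rfl⟩ : ∃ j, k = j + 1 := ⟨k - 1, (Nat.succ_pred_eq_of_pos (Nat.pos_of_ne_zero hk)).symm⟩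
  have hp0 : p ≠ 0 := hp.ne_zero
  rw [mul_apply, Nat.sum_divisorsAntidiagonal (fun a b => MF f a * AF g b),
    Nat.sum_divisors_prime_pow hp, Finset.sum_range_succ', Finset.sum_range_succ']
  have hzero : ∀ i ∈ Finset.range j, MF f (p ^ (i + 1 + 1)) * AF g (p ^ (j + 1) / p ^ (i + 1 + 1))
      = 0 := by
    intro i _
    rw [MF, pmul_apply, intCoe_apply,
      ArithmeticFunction.moebius_apply_prime_pow hp (Nat.succ_ne_zero _)]
    simp
  rw [Finset.sum_congr rfl hzero, Finset.sum_const_zero, zero_add]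
  have h0 : MF f (p ^ 0) * AF g (p ^ (j + 1) / p ^ 0) = g p ^ (j + 1) := by
    rw [pow_zero, Nat.div_one, MF, pmul_apply, intCoe_apply, ArithmeticFunction.moebius_apply_one,
      AF_apply one_ne_zero, AF_apply (pow_ne_zero _ hp0), hf1, cm_pow hg1 hgmul]
    push_cast; ring
  have h1 : MF f (p ^ (0 + 1)) * AF g (p ^ (j + 1) / p ^ (0 + 1)) = -(f p * g p ^ j) := by
    rw [zero_add, pow_one, Nat.pow_succ, Nat.mul_div_cancel _ hp.pos, MF, pmul_apply,
      intCoe_apply, ArithmeticFunction.moebius_apply_prime hp, AF_apply hp0,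
      AF_apply (pow_ne_zero _ hp0), cm_pow hg1 hgmul]
    push_cast; ring
  rw [h0, h1, Nat.add_sub_cancel]
  ring

private lemma TT_nonneg {f g : ℕ → ℝ} (hf1 : f 1 = 1)
    (hfmul : ∀ m n : ℕ, f (m * n) = f m * f n)
    (hg1 : g 1 = 1) (hgmul : ∀ m n : ℕ, g (m * n) = g m * g n)
    (hfg : ∀ p : ℕ, p.Prime → 0 ≤ f p ∧ f p ≤ g p ∧ g p < p)
    {d : ℕ} (hd : d ≠ 0) : 0 ≤ (MF f * AF g) d := by
  rw [(TT_mult hf1 hfmul hg1 hgmul).multiplicative_factorization _ hd]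
  refine Finset.prod_nonneg fun p hp => ?_
  have hpp : p.Prime := Nat.prime_of_mem_primeFactors hp
  have hk : d.factorization p ≠ 0 := Finsupp.mem_support_iff.mp hp
  show 0 ≤ (MF f * AF g) (p ^ d.factorization p)
  rw [TT_pk hf1 hg1 hgmul hpp hk]
  obtain ⟨h1, h2, _⟩ := hfg p hpp
  exact mul_nonneg (pow_nonneg (h1.trans h2) _) (by linarith)

end TT

private lemma hyperbola (N : ℕ) (u : ℕ × ℕ → ℝ) :
    ∑ n ∈ Finset.Icc 1 N, ∑ x ∈ n.divisorsAntidiagonal, u x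
      = ∑ a ∈ Finset.Icc 1 N, ∑ b ∈ Finset.Icc 1 (N / a), u (a, b) := by
  have hdisj : Set.PairwiseDisjoint ↑(Finset.Icc 1 N) Nat.divisorsAntidiagonal := by
    intro m _ n _ hmn
    simp only [Function.onFun, Finset.disjoint_left]
    intro x hxm hxn
    rw [Nat.mem_divisorsAntidiagonal] at hxm hxn
    exact hmn (hxm.1.symm.trans hxn.1)
  rw [← Finset.sum_biUnion hdisj]
  have h1 : ∑ x ∈ (Finset.Icc 1 N).biUnion Nat.divisorsAntidiagonal, u x
      = ∑ x ∈ (Finset.Icc 1 N).biUnion Nat.divisorsAntidiagonal, (fun a b => u (a, b)) x.1 x.2 := by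
    apply Finset.sum_congr rfl; intro x _; rfl
  rw [h1]
  refine Finset.sum_finset_product' (f := fun a b => u (a, b)) _ _ _ (fun p => ?_)
  simp only [Finset.mem_biUnion, Nat.mem_divisorsAntidiagonal, Finset.mem_Icc]
  constructor
  · rintro ⟨n, ⟨hn1, hnN⟩, rfl, hn0⟩
    have hp1 : 0 < p.1 := Nat.pos_of_ne_zero (by rintro h; rw [h] at hn0; simp at hn0)
    have hp2 : 0 < p.2 := Nat.pos_of_ne_zero (by rintro h; rw [h] at hn0; simp at hn0)
    refine ⟨⟨hp1, le_trans (Nat.le_mul_of_pos_right _ hp2) hnN⟩,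
      hp2, (Nat.le_div_iff_mul_le hp1).mpr (by rwa [mul_comm])⟩
  · rintro ⟨⟨hp1, hpN⟩, hq1, hqd⟩
    have hle : p.1 * p.2 ≤ N := by
      rw [mul_comm]; exact (Nat.le_div_iff_mul_le hp1).mp hqd
    exact ⟨p.1 * p.2, ⟨Nat.one_le_iff_ne_zero.mpr
      (Nat.mul_ne_zero (Nat.pos_iff_ne_zero.mp hp1) (Nat.pos_iff_ne_zero.mp hq1)), hle⟩,
      rfl, Nat.mul_ne_zero (Nat.pos_iff_ne_zero.mp hp1) (Nat.pos_iff_ne_zero.mp hq1)⟩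

private lemma ratio_bound {f g : ℕ → ℝ} (hf1 : f 1 = 1)
    (hfmul : ∀ m n : ℕ, f (m * n) = f m * f n)
    (hg1 : g 1 = 1) (hgmul : ∀ m n : ℕ, g (m * n) = g m * g n)
    (hfg : ∀ p : ℕ, p.Prime → 0 ≤ f p ∧ f p ≤ g p ∧ g p < p)
    {p : ℕ} (hp : p.Prime) (M : ℕ) :
    ∑ k ∈ Finset.range (M + 1), (MF f * AF g) (p ^ k) / (p : ℝ) ^ k
      ≤ (1 - f p / p) / (1 - g p / p) := by
  obtain ⟨hf0, hfgp, hgp⟩ := hfg p hp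
  have hp0 : (0:ℝ) < p := by exact_mod_cast hp.pos
  set a : ℝ := g p / p with ha
  have ha0 : 0 ≤ a := div_nonneg (hf0.trans hfgp) hp0.le
  have ha1 : a < 1 := by rw [ha, div_lt_one hp0]; exact hgp
  have h1a : 0 < 1 - a := by linarith
  rw [Finset.sum_range_succ']
  have hw0 : (MF f * AF g) (p ^ 0) / (p:ℝ)^0 = 1 := by
    rw [pow_zero, pow_zero, (TT_mult hf1 hfmul hg1 hgmul).map_one, div_one]
  have hwk : ∀ k, (MF f * AF g) (p ^ (k + 1)) / (p:ℝ)^(k+1) = ((g p - f p)/p) * a^k := by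
    intro k
    rw [TT_pk hf1 hg1 hgmul hp (Nat.succ_ne_zero k), Nat.succ_sub_one, ha, div_pow, pow_succ]
    have hpk : (p:ℝ)^k ≠ 0 := pow_ne_zero _ hp0.ne'
    field_simp
  rw [Finset.sum_congr rfl (fun k _ => hwk k), hw0, ← Finset.mul_sum]
  have hgeom : ∑ k ∈ Finset.range M, a ^ k ≤ (1-a)⁻¹ := by
    have hmul : (∑ k ∈ Finset.range M, a ^ k) * (1 - a) = 1 - a ^ M := by
      calc (∑ k ∈ Finset.range M, a ^ k) * (1 - a)
          = -((∑ k ∈ Finset.range M, a ^ k) * (a - 1)) := by ring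
        _ = -(a ^ M - 1) := by rw [geom_sum_mul]
        _ = 1 - a ^ M := by ring
    have haM : 0 ≤ a ^ M := pow_nonneg ha0 M
    rw [← mul_le_mul_iff_of_pos_right h1a, hmul, inv_mul_cancel₀ h1a.ne']
    linarith
  have hc : 0 ≤ (g p - f p)/p := div_nonneg (by linarith) hp0.le
  have hkey : (1 - f p / p)/(1 - g p / p) = (g p - f p)/p * (1-a)⁻¹ + 1 := by
    rw [ha]
    have h2 : (1 : ℝ) - g p / p ≠ 0 := by rw [← ha]; exact h1a.ne'
    have h3 : (p:ℝ) - g p ≠ 0 := by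
      have : 0 < (p:ℝ) - g p := by linarith
      exact this.ne'
    field_simp [h3]
    ring
  rw [hkey]
  have := mul_le_mul_of_nonneg_left hgeom hc
  linarith

private lemma Tsum_le {f g : ℕ → ℝ} (hf1 : f 1 = 1)
    (hfmul : ∀ m n : ℕ, f (m * n) = f m * f n)
    (hg1 : g 1 = 1) (hgmul : ∀ m n : ℕ, g (m * n) = g m * g n)
    (hfg : ∀ p : ℕ, p.Prime → 0 ≤ f p ∧ f p ≤ g p ∧ g p < p)
    (N : ℕ) :
    ∑ d ∈ Finset.Icc 1 N, (MF f * AF g) d / (d : ℝ)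
      ≤ ∏ p ∈ (Finset.Icc 1 N).filter Nat.Prime,
          ∑ k ∈ Finset.range (N + 1), (MF f * AF g) (p ^ k) / (p : ℝ) ^ k := by
  classical
  set T := MF f * AF g with hT
  set P := (Finset.Icc 1 N).filter Nat.Prime with hP
  have hTm := TT_mult hf1 hfmul hg1 hgmul
  -- rewrite each term as a product over P
  have hD1 : ∀ d ∈ Finset.Icc 1 N,
      T d / (d : ℝ) = ∏ x ∈ P.attach, T (x.1 ^ d.factorization x.1) / (x.1 : ℝ) ^ d.factorization x.1 := by
    intro d hd
    rw [Finset.mem_Icc] at hd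
    have hd0 : d ≠ 0 := Nat.one_le_iff_ne_zero.mp hd.1
    have hsub : d.factorization.support ⊆ P := by
      intro p hp
      rw [Nat.support_factorization] at hp
      have hpp : p.Prime := Nat.prime_of_mem_primeFactors hp
      have hpd : p ∣ d := Nat.dvd_of_mem_primeFactors hp
      rw [hP, Finset.mem_filter, Finset.mem_Icc]
      exact ⟨⟨hpp.one_lt.le, le_trans (Nat.le_of_dvd (Nat.pos_of_ne_zero hd0) hpd) hd.2⟩, hpp⟩
    have hTd : T d = d.factorization.prod fun p k => T (p ^ k) :=
      hTm.multiplicative_factorization _ hd0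
    have hdd : (d : ℝ) = d.factorization.prod fun p k => (p : ℝ) ^ k := by
      conv_lhs => rw [← Nat.factorization_prod_pow_eq_self hd0]
      rw [Finsupp.prod, Finsupp.prod]
      push_cast
      rfl
    rw [Finset.prod_attach P
      (fun p => T (p ^ d.factorization p) / (p : ℝ) ^ d.factorization p), hTd, hdd,
      Finsupp.prod, Finsupp.prod, ← Finset.prod_div_distrib]
    apply Finset.prod_subset hsub
    intro p _ hps
    rw [Finsupp.notMem_support_iff.mp hps, pow_zero, pow_zero, hTm.map_one, div_one]
  rw [Finset.sum_congr rfl hD1, Finset.prod_sum]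
  set Φ : ℕ → (∀ a ∈ P, ℕ) := fun d => fun p _ => d.factorization p with hΦ
  have hinj : ∀ x ∈ Finset.Icc 1 N, ∀ y ∈ Finset.Icc 1 N, Φ x = Φ y → x = y := by
    intro x hx y hy hxy
    rw [Finset.mem_Icc] at hx hy
    have hx0 : x ≠ 0 := Nat.one_le_iff_ne_zero.mp hx.1
    have hy0 : y ≠ 0 := Nat.one_le_iff_ne_zero.mp hy.1
    apply Nat.factorization_inj hx0 hy0
    ext p
    by_cases hp : p.Prime
    · by_cases hpN : p ∈ P
      · exact congrFun (congrFun hxy p) hpN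
      · have hnx : p ∉ x.factorization.support := by
          intro hmem
          apply hpN
          rw [Nat.support_factorization] at hmem
          rw [hP, Finset.mem_filter, Finset.mem_Icc]
          exact ⟨⟨hp.one_lt.le,
            le_trans (Nat.le_of_dvd (Nat.pos_of_ne_zero hx0) (Nat.dvd_of_mem_primeFactors hmem)) hx.2⟩, hp⟩
        have hny : p ∉ y.factorization.support := by
          intro hmem
          apply hpN
          rw [Nat.support_factorization] at hmem
          rw [hP, Finset.mem_filter, Finset.mem_Icc]
          exact ⟨⟨hp.one_lt.le,
            le_trans (Nat.le_of_dvd (Nat.pos_of_ne_zero hy0) (Nat.dvd_of_mem_primeFactors hmem)) hy.2⟩, hp⟩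
        rw [Finsupp.notMem_support_iff.mp hnx, Finsupp.notMem_support_iff.mp hny]
    · rw [Nat.factorization_eq_zero_of_not_prime _ hp, Nat.factorization_eq_zero_of_not_prime _ hp]
  have hgoal : ∀ F : ((a : ℕ) → a ∈ P → ℕ) → ℝ,
      (∀ ss, ss ∈ P.pi (fun _ => Finset.range (N + 1)) → 0 ≤ F ss) →
      ∑ d ∈ Finset.Icc 1 N, F (Φ d) ≤ ∑ ss ∈ P.pi (fun _ => Finset.range (N + 1)), F ss := by
    intro F hF0
    rw [← Finset.sum_image (g := Φ) hinj]
    apply Finset.sum_le_sum_of_subset_of_nonneg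
    · intro ss hss
      rw [Finset.mem_image] at hss
      obtain ⟨d, hd, rfl⟩ := hss
      rw [Finset.mem_Icc] at hd
      have hd0 : d ≠ 0 := Nat.one_le_iff_ne_zero.mp hd.1
      rw [Finset.mem_pi]
      intro p _
      rw [Finset.mem_range]
      exact lt_of_lt_of_le (Nat.factorization_lt p hd0) (Nat.lt_succ_of_le hd.2).le
    · exact fun ss hss _ => hF0 ss hss
  refine hgoal (fun ss => ∏ x ∈ P.attach, T (x.1 ^ ss x.1 x.2) / (x.1:ℝ) ^ ss x.1 x.2) ?_
  intro ss hss
  apply Finset.prod_nonneg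
  intro x _
  have hxp : x.1.Prime := (Finset.mem_filter.mp x.2).2
  apply div_nonneg
  · exact TT_nonneg hf1 hfmul hg1 hgmul hfg (pow_ne_zero _ hxp.ne_zero)
  · positivity

theorem stmt_3 (f g : ℕ → ℝ)
    (hf1 : f 1 = 1) (hfmul : ∀ m n : ℕ, f (m * n) = f m * f n)
    (hg1 : g 1 = 1) (hgmul : ∀ m n : ℕ, g (m * n) = g m * g n)
    (hfg : ∀ p : ℕ, p.Prime → 0 ≤ f p ∧ f p ≤ g p ∧ g p < p)
    (X : ℝ) (hX : 1 ≤ X) :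
    ∑ n ∈ Finset.Icc 1 ⌊X⌋₊, f n / n ≥
      (∏ p ∈ (Finset.Icc 1 ⌊X⌋₊).filter Nat.Prime, (1 - g p / p)) *
      (∏ p ∈ (Finset.Icc 1 ⌊X⌋₊).filter Nat.Prime, (1 - f p / p))⁻¹ *
      ∑ n ∈ Finset.Icc 1 ⌊X⌋₊, g n / n := by
  classical
  set N := ⌊X⌋₊ with hN
  set T := MF f * AF g with hT
  set P := (Finset.Icc 1 N).filter Nat.Prime with hP
  set Sf := ∑ n ∈ Finset.Icc 1 N, f n / n with hSf
  set Sg := ∑ n ∈ Finset.Icc 1 N, g n / n with hSg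
  set Pf := ∏ p ∈ P, (1 - f p / (p:ℝ)) with hPf
  set Pg := ∏ p ∈ P, (1 - g p / (p:ℝ)) with hPg
  -- positivity of the Euler factors
  have hfac : ∀ p ∈ P, 0 < 1 - g p / (p:ℝ) ∧ 1 - g p / (p:ℝ) ≤ 1 - f p / (p:ℝ) := by
    intro p hp
    have hpp : p.Prime := (Finset.mem_filter.mp hp).2
    obtain ⟨h1, h2, h3⟩ := hfg p hpp
    have hp0 : (0:ℝ) < p := by exact_mod_cast hpp.pos
    have hdiv : f p / (p:ℝ) ≤ g p / (p:ℝ) := by gcongr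
    have hlt : g p / (p:ℝ) < 1 := (div_lt_one hp0).mpr h3
    exact ⟨by linarith, by linarith⟩
  have hPg0 : 0 < Pg := Finset.prod_pos fun p hp => (hfac p hp).1
  have hPf0 : 0 < Pf :=
    Finset.prod_pos fun p hp => lt_of_lt_of_le (hfac p hp).1 (hfac p hp).2
  have hf_nonneg : ∀ n : ℕ, n ≠ 0 → 0 ≤ f n :=
    fun n hn => AF_nonneg hf1 hfmul (fun p hp => (hfg p hp).1) hn
  have hSf0 : 0 ≤ Sf := by
    apply Finset.sum_nonneg
    intro n hn
    rw [Finset.mem_Icc] at hn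
    exact div_nonneg (hf_nonneg n (Nat.one_le_iff_ne_zero.mp hn.1)) (Nat.cast_nonneg n)
  -- step 1 : expand g n / n by the convolution identity
  have hgn : ∀ n ∈ Finset.Icc 1 N, g n / (n:ℝ)
      = ∑ x ∈ n.divisorsAntidiagonal, (T x.1 / (x.1:ℝ)) * (f x.2 / (x.2:ℝ)) := by
    intro n hn
    rw [Finset.mem_Icc] at hn
    have hn0 : n ≠ 0 := Nat.one_le_iff_ne_zero.mp hn.1
    have h1 : g n = ∑ x ∈ n.divisorsAntidiagonal, T x.1 * f x.2 := by
      have h2 : AF g n = (T * AF f) n := by rw [hT, TT_conv hf1 hfmul]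
      rw [AF_apply hn0, mul_apply] at h2
      rw [h2]
      apply Finset.sum_congr rfl
      intro x hx
      rw [Nat.mem_divisorsAntidiagonal] at hx
      have hx2 : x.2 ≠ 0 := fun h => hx.2 (by rw [← hx.1, h, mul_zero])
      rw [AF_apply hx2]
    rw [h1, Finset.sum_div]
    apply Finset.sum_congr rfl
    intro x hx
    rw [Nat.mem_divisorsAntidiagonal] at hx
    have hcast : (n:ℝ) = (x.1:ℝ) * (x.2:ℝ) := by rw [← hx.1]; push_cast; ring
    rw [hcast, _root_.div_mul_div_comm]
  rw [ge_iff_le]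
  -- step 2 : hyperbola swap plus termwise bound
  have hswap : Sg = ∑ a ∈ Finset.Icc 1 N, (T a / (a:ℝ))
      * ∑ b ∈ Finset.Icc 1 (N / a), f b / (b:ℝ) := by
    rw [hSg, Finset.sum_congr rfl hgn,
      hyperbola N (fun x => (T x.1 / (x.1:ℝ)) * (f x.2 / (x.2:ℝ)))]
    refine Finset.sum_congr rfl fun a _ => ?_
    rw [Finset.mul_sum]
  have hTa : ∀ a ∈ Finset.Icc 1 N, 0 ≤ T a / (a:ℝ) := by
    intro a ha
    rw [Finset.mem_Icc] at ha
    exact div_nonneg (TT_nonneg hf1 hfmul hg1 hgmul hfg (Nat.one_le_iff_ne_zero.mp ha.1))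
      (Nat.cast_nonneg a)
  have hbound : Sg ≤ (∑ a ∈ Finset.Icc 1 N, T a / (a:ℝ)) * Sf := by
    rw [hswap, Finset.sum_mul]
    apply Finset.sum_le_sum
    intro a ha
    apply mul_le_mul_of_nonneg_left _ (hTa a ha)
    apply Finset.sum_le_sum_of_subset_of_nonneg
    · exact Finset.Icc_subset_Icc le_rfl (Nat.div_le_self N a)
    · intro b hb _
      rw [Finset.mem_Icc] at hb
      exact div_nonneg (hf_nonneg b (Nat.one_le_iff_ne_zero.mp hb.1)) (Nat.cast_nonneg b)
  -- step 3 : Euler product bound for the T-sum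
  have hTsum : (∑ a ∈ Finset.Icc 1 N, T a / (a:ℝ)) ≤ Pf / Pg := by
    refine le_trans (Tsum_le hf1 hfmul hg1 hgmul hfg N) ?_
    rw [hPf, hPg, ← Finset.prod_div_distrib]
    apply Finset.prod_le_prod
    · intro p hp
      apply Finset.sum_nonneg
      intro k _
      have hpp : p.Prime := (Finset.mem_filter.mp hp).2
      exact div_nonneg (TT_nonneg hf1 hfmul hg1 hgmul hfg (pow_ne_zero _ hpp.ne_zero))
        (by positivity)
    · intro p hp
      exact ratio_bound hf1 hfmul hg1 hgmul hfg (Finset.mem_filter.mp hp).2 N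
  -- put everything together
  have hfinal : Sg ≤ Pf / Pg * Sf :=
    le_trans hbound (mul_le_mul_of_nonneg_right hTsum hSf0)
  have h1 := mul_le_mul_of_nonneg_left hfinal (le_of_lt (mul_pos hPg0 (inv_pos.mpr hPf0)))
  calc Pg * Pf⁻¹ * Sg ≤ Pg * Pf⁻¹ * (Pf / Pg * Sf) := h1
    _ = Sf := by field_simp
end

section
/- Let P₀ be a set of primes, let x be real, and let A be a finite set of integers contained in [1, x] with |A| = k ≥ 2. For each prime p, let ν(p) denote the number of residue classes mod p occupied by A. Then for every real y ≥ 10, ∑_{y/2 < p ≤ y, p ∈ P₀} ν(p)/p ≥ k · ∑_{y/2 < p ≤ y, p ∈ P₀} 1/p − (k² − k)·(log x)/((y/2)·log(y/2)). -/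
open scoped Classical

private lemma card_le_image_add_pairs (A : Finset ℤ) (f : ℤ → ℤ) :
    A.card ≤ (A.image f).card +
      ((A ×ˢ A).filter (fun ab => ab.1 ≠ ab.2 ∧ f ab.1 = f ab.2)).card := by
  classical
  set rep : ℤ → ℤ := fun c => if h : ∃ a ∈ A, f a = c then h.choose else 0 with hrepdef
  have hrep : ∀ a ∈ A, rep (f a) ∈ A ∧ f (rep (f a)) = f a := by
    intro a ha
    have h : ∃ b ∈ A, f b = f a := ⟨a, ha, rfl⟩
    simp only [hrepdef, dif_pos h]
    exact ⟨h.choose_spec.1, h.choose_spec.2⟩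
  have hsplit := Finset.card_filter_add_card_filter_not
    (s := A) (p := fun a => rep (f a) = a)
  have h1 : (A.filter (fun a => rep (f a) = a)).card ≤ (A.image f).card := by
    apply Finset.card_le_card_of_injOn f
    · intro a ha
      exact Finset.mem_image_of_mem f (Finset.mem_filter.mp ha).1
    · intro a ha b hb hfab
      obtain ⟨ha1, ha2⟩ := Finset.mem_filter.mp ha
      obtain ⟨hb1, hb2⟩ := Finset.mem_filter.mp hb
      rw [← ha2, ← hb2, hfab]
  have h2 : (A.filter (fun a => ¬ rep (f a) = a)).card ≤
      ((A ×ˢ A).filter (fun ab => ab.1 ≠ ab.2 ∧ f ab.1 = f ab.2)).card := by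
    apply Finset.card_le_card_of_injOn (fun a => (a, rep (f a)))
    · intro a ha
      obtain ⟨ha1, ha2⟩ := Finset.mem_filter.mp ha
      refine Finset.mem_filter.mpr ⟨Finset.mem_product.mpr ⟨ha1, (hrep a ha1).1⟩, ?_, ?_⟩
      · exact fun h => ha2 h.symm
      · exact (hrep a ha1).2.symm
    · intro a _ b _ h
      exact (Prod.mk.injEq _ _ _ _ ▸ h).1
  omega

theorem stmt_4 (P₀ : Set ℕ) (hP₀ : ∀ p ∈ P₀, Nat.Prime p)
    (x : ℝ) (A : Finset ℤ) (hAx : ∀ a ∈ A, 1 ≤ a ∧ (a : ℝ) ≤ x)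
    (k : ℕ) (hk : A.card = k) (hk2 : 2 ≤ k)
    (y : ℝ) (hy : 10 ≤ y) :
    ∑ p ∈ (Finset.range (⌊y⌋₊ + 1)).filter
        (fun p => Nat.Prime p ∧ p ∈ P₀ ∧ y / 2 < (p : ℝ)),
      ((A.image (fun a => a % (p : ℤ))).card : ℝ) / p ≥
    (k : ℝ) * ∑ p ∈ (Finset.range (⌊y⌋₊ + 1)).filter
        (fun p => Nat.Prime p ∧ p ∈ P₀ ∧ y / 2 < (p : ℝ)), (1 : ℝ) / p
      - ((k : ℝ) ^ 2 - k) * Real.log x / ((y / 2) * Real.log (y / 2)) := by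
  classical
  set S := (Finset.range (⌊y⌋₊ + 1)).filter
      (fun p => Nat.Prime p ∧ p ∈ P₀ ∧ y / 2 < (p : ℝ)) with hS
  have hy2 : (5 : ℝ) ≤ y / 2 := by linarith
  have hlogy2pos : (0 : ℝ) < Real.log (y / 2) :=
    Real.log_pos (by linarith)
  obtain ⟨a₀, ha₀⟩ := Finset.card_pos.mp (by omega : 0 < A.card)
  have hx1 : (1 : ℝ) ≤ x := le_trans (by exact_mod_cast (hAx a₀ ha₀).1) (hAx a₀ ha₀).2
  have hlogx : (0 : ℝ) ≤ Real.log x := Real.log_nonneg hx1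
  set c : ℝ := Real.log x / ((y / 2) * Real.log (y / 2)) with hc
  have hcpos : 0 ≤ c := by
    apply div_nonneg hlogx
    positivity
  set P := (A ×ˢ A).filter (fun ab => ab.1 ≠ ab.2) with hP
  have hPcard : (P.card : ℝ) ≤ (k : ℝ) ^ 2 - k := by
    have hsplit := Finset.card_filter_add_card_filter_not
      (s := A ×ˢ A) (p := fun ab => ab.1 = ab.2)
    have hdiag : A.card ≤ ((A ×ˢ A).filter (fun ab => ab.1 = ab.2)).card := by
      apply Finset.card_le_card_of_injOn (fun a => (a, a))
      · intro a ha
        exact Finset.mem_filter.mpr ⟨Finset.mem_product.mpr ⟨ha, ha⟩, rfl⟩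
      · intro a _ b _ h
        exact (Prod.mk.injEq _ _ _ _ ▸ h).1
    have hprod : (A ×ˢ A).card = k * k := by rw [Finset.card_product, hk]
    have hPle : P.card ≤ k * k - k := by
      have hPeq : ((A ×ˢ A).filter (fun ab => ¬ ab.1 = ab.2)).card = P.card := by
        rw [hP]
      rw [hk] at hdiag
      omega
    have hk1 : k ≤ k * k := Nat.le_mul_of_pos_left k (by omega)
    calc (P.card : ℝ) ≤ ((k * k - k : ℕ) : ℝ) := by exact_mod_cast hPle
      _ = (k : ℝ) ^ 2 - k := by
          rw [Nat.cast_sub hk1]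
          push_cast
          ring
  have hpair : ∀ ab ∈ P,
      ∑ p ∈ S, (if (p : ℤ) ∣ ab.1 - ab.2 then (1 : ℝ) / p else 0) ≤ c := by
    intro ab hab
    obtain ⟨habmem, habne⟩ := Finset.mem_filter.mp hab
    obtain ⟨ha, hb⟩ := Finset.mem_product.mp habmem
    have hdne : ab.1 - ab.2 ≠ 0 := sub_ne_zero.mpr habne
    have hdabs : ((ab.1 - ab.2).natAbs : ℝ) ≤ x := by
      obtain ⟨h11, h12⟩ := hAx _ ha
      obtain ⟨h21, h22⟩ := hAx _ hb
      have h11' : (1 : ℝ) ≤ (ab.1 : ℝ) := by exact_mod_cast h11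
      have h21' : (1 : ℝ) ≤ (ab.2 : ℝ) := by exact_mod_cast h21
      have habs : |((ab.1 - ab.2 : ℤ) : ℝ)| ≤ x := by
        rw [abs_le]
        push_cast
        constructor <;> linarith
      calc ((ab.1 - ab.2).natAbs : ℝ) = |((ab.1 - ab.2 : ℤ) : ℝ)| := by
            push_cast [Nat.cast_natAbs]
            ring_nf
        _ ≤ x := habs
    have hTmem : ∀ p ∈ S.filter (fun (p : ℕ) => (p : ℤ) ∣ ab.1 - ab.2),
        Nat.Prime p ∧ y / 2 < (p : ℝ) ∧ (p : ℤ) ∣ ab.1 - ab.2 := by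
      intro p hp
      rw [Finset.mem_filter, hS, Finset.mem_filter] at hp
      exact ⟨hp.1.2.1, hp.1.2.2.2, hp.2⟩
    have hprodvd : (∏ p ∈ S.filter (fun (p : ℕ) => (p : ℤ) ∣ ab.1 - ab.2), p)
        ∣ (ab.1 - ab.2).natAbs := by
      apply Finset.prod_primes_dvd
      · intro p hp
        exact (hTmem p hp).1.prime
      · intro p hp
        simpa using Int.natAbs_dvd_natAbs.mpr (hTmem p hp).2.2
    have hprodle : ((∏ p ∈ S.filter (fun (p : ℕ) => (p : ℤ) ∣ ab.1 - ab.2), p : ℕ) : ℝ) ≤ x := by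
      refine le_trans ?_ hdabs
      exact_mod_cast Nat.le_of_dvd (Int.natAbs_pos.mpr hdne) hprodvd
    have hpowle : (y / 2) ^ (S.filter (fun (p : ℕ) => (p : ℤ) ∣ ab.1 - ab.2)).card ≤ x := by
      refine le_trans ?_ hprodle
      push_cast
      calc (y / 2) ^ (S.filter (fun (p : ℕ) => (p : ℤ) ∣ ab.1 - ab.2)).card
          = ∏ _p ∈ S.filter (fun (p : ℕ) => (p : ℤ) ∣ ab.1 - ab.2), (y / 2) :=
            (Finset.prod_const _).symm
        _ ≤ ∏ p ∈ S.filter (fun (p : ℕ) => (p : ℤ) ∣ ab.1 - ab.2), (p : ℝ) :=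
            Finset.prod_le_prod (fun _ _ => by linarith) (fun p hp => (hTmem p hp).2.1.le)
    have hcard : (((S.filter (fun (p : ℕ) => (p : ℤ) ∣ ab.1 - ab.2)).card : ℕ) : ℝ)
        ≤ Real.log x / Real.log (y / 2) := by
      rw [le_div_iff₀ hlogy2pos]
      have := Real.log_le_log (by positivity) hpowle
      rwa [Real.log_pow] at this
    calc ∑ p ∈ S, (if (p : ℤ) ∣ ab.1 - ab.2 then (1 : ℝ) / p else 0)
        = ∑ p ∈ S.filter (fun (p : ℕ) => (p : ℤ) ∣ ab.1 - ab.2), (1 : ℝ) / p :=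
          (Finset.sum_filter _ _).symm
      _ ≤ ∑ p ∈ S.filter (fun (p : ℕ) => (p : ℤ) ∣ ab.1 - ab.2), (1 : ℝ) / (y / 2) := by
          refine Finset.sum_le_sum fun p hp => ?_
          exact one_div_le_one_div_of_le (by linarith) (hTmem p hp).2.1.le
      _ = (((S.filter (fun (p : ℕ) => (p : ℤ) ∣ ab.1 - ab.2)).card : ℕ) : ℝ) * (1 / (y / 2)) := by
          rw [Finset.sum_const, nsmul_eq_mul]
      _ ≤ (Real.log x / Real.log (y / 2)) * (1 / (y / 2)) := by
          apply mul_le_mul_of_nonneg_right hcard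
          positivity
      _ = c := by
          rw [hc, div_mul_div_comm, mul_one, mul_comm (Real.log (y / 2)) (y / 2)]
  have hnu : ∀ p ∈ S, (k : ℝ) - ((A.image (fun a => a % (p : ℤ))).card : ℝ)
      ≤ ∑ ab ∈ P, (if (p : ℤ) ∣ ab.1 - ab.2 then (1 : ℝ) else 0) := by
    intro p hp
    have hDcard := card_le_image_add_pairs A (fun a => a % (p : ℤ))
    rw [hk] at hDcard
    have hiff : ∀ a b : ℤ, (a % (p : ℤ) = b % (p : ℤ)) ↔ (p : ℤ) ∣ a - b := by
      intro a b
      constructor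
      · intro h
        exact dvd_sub_comm.mp (Int.modEq_iff_dvd.mp h)
      · intro h
        exact Int.modEq_iff_dvd.mpr (dvd_sub_comm.mp h)
    have hfilt : ((A ×ˢ A).filter
        (fun ab => ab.1 ≠ ab.2 ∧ ab.1 % (p : ℤ) = ab.2 % (p : ℤ)))
        = (P.filter (fun ab => (p : ℤ) ∣ ab.1 - ab.2)) := by
      rw [hP, Finset.filter_filter]
      apply Finset.filter_congr
      intro ab _
      simp [hiff ab.1 ab.2]
    rw [hfilt] at hDcard
    rw [Finset.sum_boole]
    have : (k : ℝ) ≤ ((A.image (fun a => a % (p : ℤ))).card : ℝ)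
        + ((P.filter (fun ab => (p : ℤ) ∣ ab.1 - ab.2)).card : ℝ) := by
      exact_mod_cast hDcard
    linarith
  have main : (k : ℝ) * (∑ p ∈ S, (1 : ℝ) / p)
      - ∑ p ∈ S, ((A.image (fun a => a % (p : ℤ))).card : ℝ) / p
      ≤ ((k : ℝ) ^ 2 - k) * c := by
    have h1 : (k : ℝ) * (∑ p ∈ S, (1 : ℝ) / p)
        - ∑ p ∈ S, ((A.image (fun a => a % (p : ℤ))).card : ℝ) / p
        = ∑ p ∈ S, ((k : ℝ) - ((A.image (fun a => a % (p : ℤ))).card : ℝ)) * (1 / p) := by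
      rw [Finset.mul_sum, ← Finset.sum_sub_distrib]
      refine Finset.sum_congr rfl fun p _ => ?_
      ring
    rw [h1]
    calc ∑ p ∈ S, ((k : ℝ) - ((A.image (fun a => a % (p : ℤ))).card : ℝ)) * (1 / p)
        ≤ ∑ p ∈ S, (∑ ab ∈ P, (if (p : ℤ) ∣ ab.1 - ab.2 then (1 : ℝ) else 0)) * (1 / p) := by
          refine Finset.sum_le_sum fun p hp => ?_
          exact mul_le_mul_of_nonneg_right (hnu p hp) (by positivity)
      _ = ∑ ab ∈ P, ∑ p ∈ S, (if (p : ℤ) ∣ ab.1 - ab.2 then (1 : ℝ) / p else 0) := by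
          rw [Finset.sum_comm]
          refine Finset.sum_congr rfl fun p _ => ?_
          rw [Finset.sum_mul]
          refine Finset.sum_congr rfl fun ab _ => ?_
          rw [ite_mul, one_mul, zero_mul, one_div]
      _ ≤ ∑ ab ∈ P, c := Finset.sum_le_sum hpair
      _ = (P.card : ℝ) * c := by rw [Finset.sum_const, nsmul_eq_mul]
      _ ≤ ((k : ℝ) ^ 2 - k) * c := mul_le_mul_of_nonneg_right hPcard hcpos
  have hce : ((k : ℝ) ^ 2 - k) * Real.log x / ((y / 2) * Real.log (y / 2))
      = ((k : ℝ) ^ 2 - k) * c := by rw [hc, mul_div_assoc]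
  rw [ge_iff_le, hce]
  linarith
end

section
/- Let P₀ be a set of primes, x real, and A ⊆ [1, x] a finite set of integers with |A| = k ≥ 2, occupying ν(p) residue classes modulo each prime p. If y ≥ 10 and ∑_{y/2 < p ≤ y, p ∈ P₀} log p ≥ 8k·log x, then ∑_{y/2 < p ≤ y, p ∈ P₀} ν(p)/p ≥ (k/2) · ∑_{y/2 < p ≤ y, p ∈ P₀} 1/p. -/
open scoped Classical

lemma nat_m_le (m : ℕ) : m ≤ 1 + (m * m - m) := by
  cases m with
  | zero => simp
  | succ n =>
    have h : (n+1)*(n+1) = n*n + 2*n + 1 := by ring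
    omega

lemma card_le_image_add_pairs_s5 (s : Finset ℤ) (f : ℤ → ℤ) :
    s.card ≤ (s.image f).card + (s.offDiag.filter fun q => f q.1 = f q.2).card := by
  classical
  rw [Finset.card_eq_sum_card_fiberwise (fun a ha => Finset.mem_image_of_mem f ha)]
  rw [Finset.card_eq_sum_card_fiberwise
      (f := fun q : ℤ × ℤ => f q.1) (t := s.image f)
      (fun q hq => Finset.mem_image_of_mem f (Finset.mem_offDiag.mp (Finset.mem_filter.mp hq).1).1)]
  rw [Finset.card_eq_sum_ones (s.image f), ← Finset.sum_add_distrib]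
  refine Finset.sum_le_sum fun b _ => ?_
  have hsub : (s.filter fun a => f a = b).offDiag ⊆
      Finset.filter (fun q => f q.1 = b) (s.offDiag.filter fun q => f q.1 = f q.2) := by
    intro q hq
    rw [Finset.mem_offDiag] at hq
    obtain ⟨h1, h2, h3⟩ := hq
    rw [Finset.mem_filter] at h1 h2
    simp only [Finset.mem_filter, Finset.mem_offDiag]
    exact ⟨⟨⟨h1.1, h2.1, h3⟩, h1.2.trans h2.2.symm⟩, h1.2⟩
  have hcard := Finset.card_le_card hsub
  rw [Finset.offDiag_card] at hcard
  have := nat_m_le (s.filter fun a => f a = b).card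
  omega

lemma count_prime_divisors (y x : ℝ) (hy5 : 5 ≤ y / 2)
    (S : Finset ℕ) (hS : ∀ p ∈ S, Nat.Prime p ∧ y / 2 < (p : ℝ))
    (d : ℤ) (hd : d ≠ 0) (hdx : |(d : ℝ)| ≤ x) :
    ((S.filter (fun p : ℕ => (p : ℤ) ∣ d)).card : ℝ) ≤ Real.log x / Real.log (y / 2) := by
  classical
  set F := S.filter (fun p : ℕ => (p:ℤ) ∣ d) with hF
  have hprod_dvd : (∏ p ∈ F, (p:ℕ)) ∣ d.natAbs := by
    apply Finset.prod_primes_dvd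
    · intro p hp
      exact (hS p (Finset.mem_filter.mp hp).1).1.prime
    · intro p hp
      have h := (Finset.mem_filter.mp hp).2
      rw [← Int.natAbs_dvd_natAbs] at h; simpa using h
  have hna : d.natAbs ≠ 0 := Int.natAbs_ne_zero.mpr hd
  have hle : (∏ p ∈ F, (p:ℕ)) ≤ d.natAbs := Nat.le_of_dvd (Nat.pos_of_ne_zero hna) hprod_dvd
  have hpow : (y/2) ^ F.card ≤ x := by
    calc (y/2)^F.card = ∏ _p ∈ F, (y/2) := (Finset.prod_const _).symm
    _ ≤ ∏ p ∈ F, (p:ℝ) := Finset.prod_le_prod (fun _ _ => by linarith)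
        (fun p hp => le_of_lt (hS p (Finset.mem_filter.mp hp).1).2)
    _ = ((∏ p ∈ F, (p:ℕ) : ℕ) : ℝ) := by push_cast; ring
    _ ≤ (d.natAbs : ℝ) := by exact_mod_cast hle
    _ = |(d:ℝ)| := by rw [Nat.cast_natAbs, Int.cast_abs]
    _ ≤ x := hdx
  have hlog2 : 0 < Real.log (y/2) := Real.log_pos (by linarith)
  rw [le_div_iff₀ hlog2]
  have h := Real.log_le_log (by positivity) hpow
  rwa [Real.log_pow] at h

theorem stmt_5 (P₀ : Set ℕ) (hP₀ : ∀ p ∈ P₀, Nat.Prime p)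
    (x : ℝ) (A : Finset ℤ) (hAx : ∀ a ∈ A, 1 ≤ a ∧ (a : ℝ) ≤ x)
    (k : ℕ) (hk : A.card = k) (hk2 : 2 ≤ k)
    (y : ℝ) (hy : 10 ≤ y)
    (hlog : ∑ p ∈ (Finset.range (⌊y⌋₊ + 1)).filter
        (fun p => Nat.Prime p ∧ p ∈ P₀ ∧ y / 2 < (p : ℝ)),
        Real.log p ≥ 8 * (k : ℝ) * Real.log x) :
    ∑ p ∈ (Finset.range (⌊y⌋₊ + 1)).filter
        (fun p => Nat.Prime p ∧ p ∈ P₀ ∧ y / 2 < (p : ℝ)),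
      ((A.image (fun a => a % (p : ℤ))).card : ℝ) / p ≥
    ((k : ℝ) / 2) * ∑ p ∈ (Finset.range (⌊y⌋₊ + 1)).filter
        (fun p => Nat.Prime p ∧ p ∈ P₀ ∧ y / 2 < (p : ℝ)), (1 : ℝ) / p := by
  classical
  set S := (Finset.range (⌊y⌋₊ + 1)).filter
      (fun p => Nat.Prime p ∧ p ∈ P₀ ∧ y / 2 < (p : ℝ)) with hSdef
  have hy0 : (0:ℝ) < y := by linarith
  have hSmem : ∀ p ∈ S, Nat.Prime p ∧ y/2 < (p:ℝ) ∧ (p:ℝ) ≤ y := by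
    intro p hp
    rw [hSdef, Finset.mem_filter, Finset.mem_range] at hp
    refine ⟨hp.2.1, hp.2.2.2, ?_⟩
    have h1 : p ≤ ⌊y⌋₊ := by omega
    calc (p:ℝ) ≤ (⌊y⌋₊:ℝ) := by exact_mod_cast h1
    _ ≤ y := Nat.floor_le hy0.le
  have hppos : ∀ p ∈ S, (0:ℝ) < p := fun p hp => by
    have := (hSmem p hp).2.1; linarith
  -- x ≥ 2
  have hx2 : (2:ℝ) ≤ x := by
    have h1 : 1 < A.card := by omega
    obtain ⟨a, ha, b, hb, hab⟩ := Finset.one_lt_card.mp h1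
    rcases lt_or_gt_of_ne hab with h | h
    · have h2 : (2:ℤ) ≤ b := by have := (hAx a ha).1; omega
      calc (2:ℝ) ≤ (b:ℝ) := by exact_mod_cast h2
      _ ≤ x := (hAx b hb).2
    · have h2 : (2:ℤ) ≤ a := by have := (hAx b hb).1; omega
      calc (2:ℝ) ≤ (a:ℝ) := by exact_mod_cast h2
      _ ≤ x := (hAx a ha).2
  have hlogx : 0 < Real.log x := Real.log_pos (by linarith)
  have hlogy : 0 < Real.log y := Real.log_pos (by linarith)
  have hlogy2 : 0 < Real.log (y/2) := Real.log_pos (by linarith)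
  have hloghalf : Real.log y ≤ 2 * Real.log (y/2) := by
    have h1 : y ≤ (y/2)^2 := by nlinarith
    have h2 := Real.log_le_log hy0 h1
    rw [Real.log_pow] at h2
    push_cast at h2
    linarith
  have hk0 : (0:ℝ) < k := by
    have : 0 < k := by omega
    exact_mod_cast this
  -- ν ≤ k
  have hνk : ∀ p : ℕ, (A.image (fun a => a % (p:ℤ))).card ≤ k := fun p =>
    hk ▸ Finset.card_image_le
  -- k ≤ ν p + t p
  have hkν : ∀ p : ℕ, k ≤ (A.image (fun a => a % (p:ℤ))).card
      + (A.offDiag.filter fun q => (p:ℤ) ∣ q.1 - q.2).card := by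
    intro p
    have h := card_le_image_add_pairs_s5 A (fun a => a % (p:ℤ))
    rw [hk] at h
    have heq : (A.offDiag.filter fun q => q.1 % (p:ℤ) = q.2 % (p:ℤ))
        = (A.offDiag.filter fun q => (p:ℤ) ∣ q.1 - q.2) := by
      apply Finset.filter_congr
      intro q _
      exact ⟨fun h => Int.ModEq.dvd h.symm, fun h => (Int.modEq_iff_dvd.mpr h).symm⟩
    rw [heq] at h
    exact h
  -- double counting
  have hdouble : ∑ p ∈ S, (A.offDiag.filter fun q => (p:ℤ) ∣ q.1 - q.2).card
      = ∑ q ∈ A.offDiag, (S.filter (fun p : ℕ => (p:ℤ) ∣ q.1 - q.2)).card := by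
    simp only [Finset.card_filter]
    exact Finset.sum_comm
  -- per-pair bound
  have hpair : ∀ q ∈ A.offDiag,
      ((S.filter (fun p : ℕ => (p:ℤ) ∣ q.1 - q.2)).card : ℝ)
        ≤ Real.log x / Real.log (y/2) := by
    intro q hq
    rw [Finset.mem_offDiag] at hq
    obtain ⟨h1, h2, h3⟩ := hq
    apply count_prime_divisors y x (by linarith)
    · intro p hp
      exact ⟨(hSmem p hp).1, (hSmem p hp).2.1⟩
    · exact sub_ne_zero.mpr h3
    · have ha1 := (hAx _ h1).1; have ha2 := (hAx _ h1).2
      have hb1 := (hAx _ h2).1; have hb2 := (hAx _ h2).2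
      have c1 : (1:ℝ) ≤ (q.1:ℝ) := by exact_mod_cast ha1
      have c2 : (1:ℝ) ≤ (q.2:ℝ) := by exact_mod_cast hb1
      rw [abs_le]
      push_cast
      constructor <;> linarith
  -- sum over S bound on E
  have hE : ∑ p ∈ S, ((k:ℝ) - (A.image (fun a => a % (p:ℤ))).card) / p
      ≤ (2/y) * ((k:ℝ)^2 * (Real.log x / Real.log (y/2))) := by
    have step1 : ∑ p ∈ S, ((k:ℝ) - (A.image (fun a => a % (p:ℤ))).card) / p
        ≤ ∑ p ∈ S, ((A.offDiag.filter fun q => (p:ℤ) ∣ q.1 - q.2).card : ℝ) * (2/y) := by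
      apply Finset.sum_le_sum
      intro p hp
      have hp0 := hppos p hp
      have hyp := (hSmem p hp).2.1
      have h1 : (k:ℝ) - (A.image (fun a => a % (p:ℤ))).card
          ≤ ((A.offDiag.filter fun q => (p:ℤ) ∣ q.1 - q.2).card : ℝ) := by
        have := hkν p
        have h2 : (k:ℝ) ≤ ((A.image (fun a => a % (p:ℤ))).card : ℝ)
            + ((A.offDiag.filter fun q => (p:ℤ) ∣ q.1 - q.2).card : ℝ) := by
          exact_mod_cast this
        linarith
      have hnn : (0:ℝ) ≤ ((A.offDiag.filter fun q => (p:ℤ) ∣ q.1 - q.2).card : ℝ) :=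
        Nat.cast_nonneg _
      calc ((k:ℝ) - (A.image (fun a => a % (p:ℤ))).card) / p
          ≤ ((A.offDiag.filter fun q => (p:ℤ) ∣ q.1 - q.2).card : ℝ) / p := by
            apply div_le_div_of_nonneg_right h1 hp0.le  -- maybe wrong name
      _ = ((A.offDiag.filter fun q => (p:ℤ) ∣ q.1 - q.2).card : ℝ) * (1/p) := by ring
      _ ≤ ((A.offDiag.filter fun q => (p:ℤ) ∣ q.1 - q.2).card : ℝ) * (2/y) := by
            apply mul_le_mul_of_nonneg_left _ hnn
            rw [div_le_div_iff₀ hp0 hy0]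
            linarith
    have step2 : ∑ p ∈ S, ((A.offDiag.filter fun q => (p:ℤ) ∣ q.1 - q.2).card : ℝ) * (2/y)
        = (2/y) * ((∑ p ∈ S, (A.offDiag.filter fun q => (p:ℤ) ∣ q.1 - q.2).card : ℕ) : ℝ) := by
      rw [← Finset.sum_mul]
      push_cast
      ring
    have step3 : ((∑ p ∈ S, (A.offDiag.filter fun q => (p:ℤ) ∣ q.1 - q.2).card : ℕ) : ℝ)
        ≤ (k:ℝ)^2 * (Real.log x / Real.log (y/2)) := by
      rw [hdouble]
      push_cast
      calc ∑ q ∈ A.offDiag, ((S.filter (fun p : ℕ => (p:ℤ) ∣ q.1 - q.2)).card : ℝ)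
          ≤ ∑ _q ∈ A.offDiag, (Real.log x / Real.log (y/2)) := Finset.sum_le_sum hpair
      _ = (A.offDiag.card : ℝ) * (Real.log x / Real.log (y/2)) := by
            rw [Finset.sum_const, nsmul_eq_mul]
      _ ≤ (k:ℝ)^2 * (Real.log x / Real.log (y/2)) := by
            apply mul_le_mul_of_nonneg_right _ (by positivity)
            rw [Finset.offDiag_card, hk]
            have hkk : k * k - k ≤ k * k := Nat.sub_le _ _
            calc ((k * k - k : ℕ) : ℝ) ≤ ((k * k : ℕ) : ℝ) := by exact_mod_cast hkk
            _ = (k:ℝ)^2 := by push_cast; ring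
    calc ∑ p ∈ S, ((k:ℝ) - (A.image (fun a => a % (p:ℤ))).card) / p
        ≤ _ := step1
    _ = _ := step2
    _ ≤ (2/y) * ((k:ℝ)^2 * (Real.log x / Real.log (y/2))) := by
          apply mul_le_mul_of_nonneg_left step3 (by positivity)
  -- lower bound on card S
  have hcardS : 8 * (k:ℝ) * Real.log x / Real.log y ≤ (S.card : ℝ) := by
    rw [div_le_iff₀ hlogy]
    calc 8 * (k:ℝ) * Real.log x ≤ ∑ p ∈ S, Real.log p := hlog
    _ ≤ ∑ _p ∈ S, Real.log y := by
        apply Finset.sum_le_sum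
        intro p hp
        exact Real.log_le_log (hppos p hp) (hSmem p hp).2.2
    _ = (S.card : ℝ) * Real.log y := by rw [Finset.sum_const, nsmul_eq_mul]
  have hsum1p : (S.card : ℝ) * (1/y) ≤ ∑ p ∈ S, (1:ℝ)/p := by
    calc (S.card : ℝ) * (1/y) = ∑ _p ∈ S, (1/y) := by rw [Finset.sum_const, nsmul_eq_mul]
    _ ≤ ∑ p ∈ S, (1:ℝ)/p := by
        apply Finset.sum_le_sum
        intro p hp
        exact one_div_le_one_div_of_le (hppos p hp) (hSmem p hp).2.2
  -- final comparison
  have hfinal : (2/y) * ((k:ℝ)^2 * (Real.log x / Real.log (y/2)))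
      ≤ ((k:ℝ)/2) * ∑ p ∈ S, (1:ℝ)/p := by
    have e1 : (2/y) * ((k:ℝ)^2 * (Real.log x / Real.log (y/2)))
        = ((k:ℝ)^2 * Real.log x / y) * (2 / Real.log (y/2)) := by ring
    have e2 : ((k:ℝ)/2) * ((8 * (k:ℝ) * Real.log x / Real.log y) * (1/y))
        = ((k:ℝ)^2 * Real.log x / y) * (4 / Real.log y) := by ring
    have h24 : (2 / Real.log (y/2)) ≤ 4 / Real.log y := by
      rw [div_le_div_iff₀ hlogy2 hlogy]
      linarith
    have hfac : (0:ℝ) ≤ (k:ℝ)^2 * Real.log x / y := by positivity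
    calc (2/y) * ((k:ℝ)^2 * (Real.log x / Real.log (y/2)))
        = ((k:ℝ)^2 * Real.log x / y) * (2 / Real.log (y/2)) := e1
    _ ≤ ((k:ℝ)^2 * Real.log x / y) * (4 / Real.log y) :=
        mul_le_mul_of_nonneg_left h24 hfac
    _ = ((k:ℝ)/2) * ((8 * (k:ℝ) * Real.log x / Real.log y) * (1/y)) := e2.symm
    _ ≤ ((k:ℝ)/2) * ((S.card : ℝ) * (1/y)) := by
        apply mul_le_mul_of_nonneg_left _ (by positivity)
        apply mul_le_mul_of_nonneg_right hcardS (by positivity)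
    _ ≤ ((k:ℝ)/2) * ∑ p ∈ S, (1:ℝ)/p := by
        apply mul_le_mul_of_nonneg_left hsum1p (by positivity)
  -- put together
  have hsplit : ∑ p ∈ S, (((A.image (fun a => a % (p:ℤ))).card : ℝ)) / p
      = (k:ℝ) * ∑ p ∈ S, (1:ℝ)/p
        - ∑ p ∈ S, ((k:ℝ) - (A.image (fun a => a % (p:ℤ))).card) / p := by
    rw [Finset.mul_sum, ← Finset.sum_sub_distrib]
    apply Finset.sum_congr rfl
    intro p hp
    have hp0 := hppos p hp
    field_simp
    ring
  have hEfin : ∑ p ∈ S, ((k:ℝ) - (A.image (fun a => a % (p:ℤ))).card) / p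
      ≤ ((k:ℝ)/2) * ∑ p ∈ S, (1:ℝ)/p := le_trans hE hfinal
  rw [ge_iff_le, hsplit]
  have hring : (k:ℝ) * ∑ p ∈ S, (1:ℝ)/p
      = 2 * (((k:ℝ)/2) * ∑ p ∈ S, (1:ℝ)/p) := by ring
  linarith
end

section
/- Gallagher's larger sieve: Let N ≥ 2, let P₀ be a finite set of primes, and let A ⊆ {1, ..., N} be a set of integers which, for each p ∈ P₀, occupies at most ν(p) residue classes modulo p, where 1 ≤ ν(p) ≤ p. Suppose −log N + ∑_{p ∈ P₀} (log p)/ν(p) > 0. Then |A| ≤ (−log N + ∑_{p ∈ P₀} log p) / (−log N + ∑_{p ∈ P₀} (log p)/ν(p)). -/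
open Finset

lemma pair_count_aux (A : Finset ℕ) (p : ℕ) :
    ∑ r ∈ A.image (· % p), ((A.filter (fun a => a % p = r)).card) ^ 2
      = ((A ×ˢ A).filter (fun q => q.1 % p = q.2 % p)).card := by
  classical
  have h : ∀ r ∈ A.image (· % p), ((A.filter (fun a => a % p = r)).card) ^ 2
      = ((A.filter (fun a => a % p = r)) ×ˢ (A.filter (fun a => a % p = r))).card := by
    intro r _
    rw [Finset.card_product]; ring
  rw [Finset.sum_congr rfl h, ← Finset.card_biUnion]
  · congr 1
    ext q
    simp only [Finset.mem_biUnion, Finset.mem_image, Finset.mem_filter, Finset.mem_product]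
    constructor
    · rintro ⟨r, -, ⟨h1, e1⟩, h2, e2⟩
      exact ⟨⟨h1, h2⟩, e1.trans e2.symm⟩
    · rintro ⟨⟨h1, h2⟩, e⟩
      exact ⟨q.1 % p, ⟨q.1, h1, rfl⟩, ⟨h1, rfl⟩, h2, e.symm⟩
  · intro x hx y hy hxy
    refine Finset.disjoint_left.2 ?_
    rintro q hq hq'
    simp only [Finset.mem_product, Finset.mem_filter] at hq hq'
    exact hxy (hq.1.2.symm.trans hq'.1.2)

theorem stmt_6 (N : ℕ) (hN : 2 ≤ N) (P₀ : Finset ℕ)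
    (hP₀ : ∀ p ∈ P₀, Nat.Prime p)
    (A : Finset ℕ) (hA : A ⊆ Finset.Icc 1 N)
    (ν : ℕ → ℝ)
    (hν : ∀ p ∈ P₀, 1 ≤ ν p ∧ ν p ≤ p ∧ ((A.image (· % p)).card : ℝ) ≤ ν p)
    (hpos : 0 < -Real.log N + ∑ p ∈ P₀, Real.log p / ν p) :
    (A.card : ℝ) ≤ (-Real.log N + ∑ p ∈ P₀, Real.log p) /
      (-Real.log N + ∑ p ∈ P₀, Real.log p / ν p) := by
  classical
  set Z : ℝ := (A.card : ℝ) with hZdef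
  set L : ℝ := ∑ p ∈ P₀, Real.log p with hLdef
  set T : ℝ := ∑ p ∈ P₀, Real.log p / ν p with hTdef
  set O : Finset (ℕ × ℕ) := (A ×ˢ A).filter (fun q => ¬ q.1 = q.2) with hOdef
  have hlogp : ∀ p ∈ P₀, 0 ≤ Real.log p := fun p hp =>
    Real.log_nonneg (by exact_mod_cast (hP₀ p hp).one_lt.le)
  have hTL : T ≤ L := Finset.sum_le_sum fun p hp => div_le_self (hlogp p hp) (hν p hp).1
  -- diagonal count
  have hdiag : ((A ×ˢ A).filter (fun q => q.1 = q.2)).card = A.card := by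
    have : (A ×ˢ A).filter (fun q : ℕ × ℕ => q.1 = q.2) = A.image (fun a => (a, a)) := by
      ext q
      simp only [Finset.mem_filter, Finset.mem_product, Finset.mem_image]
      constructor
      · rintro ⟨⟨h1, h2⟩, e⟩
        exact ⟨q.1, h1, by rw [Prod.ext_iff]; exact ⟨rfl, e⟩⟩
      · rintro ⟨a, ha, rfl⟩
        exact ⟨⟨ha, ha⟩, rfl⟩
    rw [this, Finset.card_image_of_injective _ (fun a b h => (Prod.ext_iff.1 h).1)]
  have hOcard : (O.card : ℝ) = Z ^ 2 - Z := by
    have h := Finset.card_filter_add_card_filter_not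
      (s := A ×ˢ A) (p := fun q : ℕ × ℕ => q.1 = q.2)
    rw [hdiag, Finset.card_product] at h
    have : (A.card : ℝ) + (O.card : ℝ) = (A.card : ℝ) * (A.card : ℝ) := by
      rw [hOdef]; exact_mod_cast h
    rw [hZdef]; nlinarith [this]
  -- per-prime inequality
  have hper : ∀ p ∈ P₀, Z ^ 2 * (Real.log p / ν p) ≤
      Real.log p * (Z + ((O.filter (fun q => q.1 % p = q.2 % p)).card : ℝ)) := by
    intro p hp
    obtain ⟨hν1, hνp, hνcard⟩ := hν p hp
    have hν0 : (0 : ℝ) < ν p := lt_of_lt_of_le one_pos hν1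
    set D : Finset (ℕ × ℕ) := (A ×ˢ A).filter (fun q => q.1 % p = q.2 % p) with hD
    have hfib : A.card = ∑ r ∈ A.image (· % p), (A.filter (fun a => a % p = r)).card :=
      Finset.card_eq_sum_card_fiberwise (fun a ha => Finset.mem_image_of_mem _ ha)
    have hCS : Z ^ 2 ≤ ((A.image (· % p)).card : ℝ) * (D.card : ℝ) := by
      have := pair_count_aux A p
      rw [hD, ← this, hZdef, hfib]
      push_cast
      exact sq_sum_le_card_mul_sum_sq
    have hZD : Z ^ 2 ≤ ν p * (D.card : ℝ) :=
      hCS.trans (mul_le_mul_of_nonneg_right hνcard (Nat.cast_nonneg _))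
    have hdivD : Z ^ 2 / ν p ≤ (D.card : ℝ) := (div_le_iff₀ hν0).2 (by nlinarith)
    -- split D into diagonal and off-diagonal
    have hsplit : (D.card : ℝ) ≤ Z + ((O.filter (fun q => q.1 % p = q.2 % p)).card : ℝ) := by
      have h := Finset.card_filter_add_card_filter_not
        (s := D) (p := fun q : ℕ × ℕ => q.1 = q.2)
      have h1 : (D.filter (fun q : ℕ × ℕ => q.1 = q.2)).card ≤ A.card := by
        rw [← hdiag]
        apply Finset.card_le_card
        intro q hq
        simp only [hD, Finset.mem_filter, Finset.mem_product] at hq ⊢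
        exact ⟨hq.1.1, hq.2⟩
      have h2 : D.filter (fun q : ℕ × ℕ => ¬ q.1 = q.2)
          = O.filter (fun q => q.1 % p = q.2 % p) := by
        rw [hD, hOdef, Finset.filter_filter, Finset.filter_filter]
        exact Finset.filter_congr fun q _ => by tauto
      have hle : D.card ≤ A.card + (O.filter (fun q => q.1 % p = q.2 % p)).card := by
        rw [h2] at h
        omega
      rw [hZdef]
      exact_mod_cast hle
    calc Z ^ 2 * (Real.log p / ν p) = Real.log p * (Z ^ 2 / ν p) := by ring
      _ ≤ Real.log p * (D.card : ℝ) := mul_le_mul_of_nonneg_left hdivD (hlogp p hp)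
      _ ≤ _ := mul_le_mul_of_nonneg_left hsplit (hlogp p hp)
  -- pair bound
  have hpair : ∀ q ∈ O, ∑ p ∈ P₀, (if q.1 % p = q.2 % p then Real.log p else 0)
      ≤ Real.log N := by
    intro q hq
    simp only [hOdef, Finset.mem_filter, Finset.mem_product] at hq
    obtain ⟨⟨ha, hb⟩, hne⟩ := hq
    obtain ⟨ha1, haN⟩ := Finset.mem_Icc.1 (hA ha)
    obtain ⟨hb1, hbN⟩ := Finset.mem_Icc.1 (hA hb)
    set m : ℕ := ((q.2 : ℤ) - (q.1 : ℤ)).natAbs with hm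
    have hm0 : m ≠ 0 := by omega
    have hmN : m ≤ N := by omega
    rw [← Finset.sum_filter]
    set S : Finset ℕ := P₀.filter (fun p => q.1 % p = q.2 % p) with hS
    have hdvd : ∏ p ∈ S, p ∣ m := by
      refine Finset.prod_primes_dvd m ?_ ?_
      · intro p hp
        exact (hP₀ p (Finset.mem_filter.1 hp).1).prime
      · intro p hp
        have hmod : q.1 ≡ q.2 [MOD p] := (Finset.mem_filter.1 hp).2
        exact Int.natCast_dvd.1 hmod.dvd
    have hprodN : ∏ p ∈ S, p ≤ N :=
      le_trans (Nat.le_of_dvd (Nat.pos_of_ne_zero hm0) hdvd) hmN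
    have hne0 : ∀ p ∈ S, ((p : ℝ)) ≠ 0 := by
      intro p hp
      exact_mod_cast (hP₀ p (Finset.mem_filter.1 hp).1).pos.ne'
    calc ∑ p ∈ S, Real.log p = Real.log (∏ p ∈ S, (p : ℝ)) :=
          (Real.log_prod (s := S) hne0).symm
      _ = Real.log ((∏ p ∈ S, p : ℕ) : ℝ) := by push_cast; ring_nf
      _ ≤ Real.log N := by
          apply Real.log_le_log
          · exact_mod_cast Nat.pos_of_ne_zero fun h => hm0 (Nat.eq_zero_of_zero_dvd (h ▸ hdvd))
          · exact_mod_cast hprodN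
  -- key inequality
  have hkey : Z ^ 2 * T ≤ Z * L + (Z ^ 2 - Z) * Real.log N := by
    have h1 : Z ^ 2 * T ≤ ∑ p ∈ P₀,
        Real.log p * (Z + ((O.filter (fun q => q.1 % p = q.2 % p)).card : ℝ)) := by
      rw [hTdef, Finset.mul_sum]
      exact Finset.sum_le_sum hper
    have h2 : ∑ p ∈ P₀,
        Real.log p * (Z + ((O.filter (fun q => q.1 % p = q.2 % p)).card : ℝ))
        = Z * L + ∑ p ∈ P₀,
            Real.log p * ((O.filter (fun q => q.1 % p = q.2 % p)).card : ℝ) := by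
      rw [hLdef, Finset.mul_sum, ← Finset.sum_add_distrib]
      exact Finset.sum_congr rfl fun p _ => by ring
    have h3 : ∑ p ∈ P₀, Real.log p * ((O.filter (fun q => q.1 % p = q.2 % p)).card : ℝ)
        ≤ (O.card : ℝ) * Real.log N := by
      have e1 : ∀ p ∈ P₀,
          Real.log p * ((O.filter (fun q => q.1 % p = q.2 % p)).card : ℝ)
          = ∑ q ∈ O, if q.1 % p = q.2 % p then Real.log p else 0 := by
        intro p _
        rw [← Finset.sum_filter, Finset.sum_const, nsmul_eq_mul, mul_comm]
      rw [Finset.sum_congr rfl e1, Finset.sum_comm]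
      calc ∑ q ∈ O, ∑ p ∈ P₀, (if q.1 % p = q.2 % p then Real.log p else 0)
          ≤ ∑ _q ∈ O, Real.log N := Finset.sum_le_sum hpair
        _ = (O.card : ℝ) * Real.log N := by rw [Finset.sum_const, nsmul_eq_mul]
    rw [hOcard] at h3
    linarith [h1, h2 ▸ h1, h3]
  -- conclude
  have hd : (0 : ℝ) < -Real.log N + T := hpos
  rw [le_div_iff₀ hd]
  rcases Nat.eq_zero_or_pos A.card with h0 | h0
  · have : Z = 0 := by rw [hZdef, h0]; norm_num
    rw [this, zero_mul]
    linarith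
  · have hZ1 : (1 : ℝ) ≤ Z := by rw [hZdef]; exact_mod_cast h0
    nlinarith [hkey, hZ1, hd]
end
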